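/- Let φ ∈ (0,1), ω = e^{2πiφ}, α ∈ ℂ with α ≠ 0, β = −iα, and λ ∈ ℂ with λ ≠ 0. If (√2/(λα))·((−λ² + ω/2)α − (ω/2)β) = ω(α−β)/(√2 λ((ω−1)α − ωβ)), then λ² = ω[(1−2ω+ω²) + i(1−ω+ω²)]/(1−2ω+2ω²). (The denominators (ω−1)α−ωβ and 1−2ω+2ω² are automatically nonzero since |ω| = 1.) -/

import Mathlib

theorem wojcik_lambda_sq_beta_eq_neg_i_alpha
    (φ : ℝ) (hφ : φ ∈ Set.Ioo (0 : ℝ) 1) (ω α β lam : ℂ)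
    (hω : ω = Complex.exp (2 * (Real.pi : ℂ) * Complex.I * (φ : ℂ)))
    (hα : α ≠ 0) (hβ : β = -Complex.I * α) (hlam : lam ≠ 0)
    (h : (Real.sqrt 2 : ℂ) / (lam * α) * ((-lam ^ 2 + ω / 2) * α - ω / 2 * β) =
         ω * (α - β) / ((Real.sqrt 2 : ℂ) * lam * ((ω - 1) * α - ω * β))) :
    lam ^ 2 =
      ω * ((1 - 2 * ω + ω ^ 2) + Complex.I * (1 - ω + ω ^ 2)) / (1 - 2 * ω + 2 * ω ^ 2) := by
  subst hβ
  have hns : Complex.normSq ω = 1 := by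
    rw [hω, Complex.normSq_eq_norm_sq, Complex.norm_exp]
    norm_num [Complex.mul_re, Complex.mul_im]
  have hm : ω ≠ (1 - Complex.I)/2 ∧ ω ≠ (1 + Complex.I)/2 := by
    constructor <;> intro h0 <;> rw [h0] at hns <;> simp [Complex.normSq_apply] at hns <;> norm_num at hns
  have h1 : ω * (1 + Complex.I) - 1 ≠ 0 := by
    intro h0
    exact hm.1 (by linear_combination ((1 - Complex.I)/2) * h0 + (ω/2) * Complex.I_sq)
  have h2 : (1 : ℂ) - 2 * ω + 2 * ω ^ 2 ≠ 0 := by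
    intro h0
    have hsq : (2*ω - 1 - Complex.I) * (2*ω - 1 + Complex.I) = 0 := by
      linear_combination 2 * h0 - Complex.I_sq
    rcases mul_eq_zero.1 hsq with hc | hc
    · exact hm.2 (by linear_combination hc/2)
    · exact hm.1 (by linear_combination hc/2)
  have hs2 : ((Real.sqrt 2 : ℝ) : ℂ) ≠ 0 := by
    norm_cast
    positivity
  have hd : (ω - 1) * α - ω * (-Complex.I * α) ≠ 0 := by
    intro h0
    have hz : (ω * (1 + Complex.I) - 1) * α = 0 := by linear_combination h0
    rcases mul_eq_zero.1 hz with hc | hc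
    · exact h1 hc
    · exact hα hc
  have hsq2 : ((Real.sqrt 2 : ℝ) : ℂ)^2 = 2 := by
    norm_cast
    rw [Real.sq_sqrt] <;> norm_num
  field_simp at h
  rw [eq_div_iff (by
    intro h0
    apply h1
    linear_combination h0)] at h
  have key : 2*lam*α^2 * ((-2*lam^2 + ω*(1+Complex.I)) * (ω*(1+Complex.I)-1)) =
      2*lam*α^2 * (ω*(1+Complex.I)) := by
    linear_combination lam*α^2*h - lam*α^2*((-2*lam^2 + ω*(1+Complex.I))*(ω*(1+Complex.I)-1))*hsq2
  have hE := mul_left_cancel₀ (mul_ne_zero (mul_ne_zero two_ne_zero hlam) (pow_ne_zero 2 hα)) key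
  rw [eq_div_iff h2]
  linear_combination ((1 - ω*(1-Complex.I))/2) * hE + (lam^2*ω^2 + ω^2/2 - ω^3*(1+Complex.I)/2) * Complex.I_sq
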